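/- Let R be a ring such that every right singular element of R (every a ∈ R whose right annihilator is nonzero, i.e., a·b = 0 for some b ≠ 0) is a product of idempotent elements of R. Then R is Dedekind finite: for all a, b ∈ R, a·b = 1 implies b·a = 1. -/

import Mathlib

lemma prod_idem_right_inv_eq_one {R : Type*} [Ring R] :
    ∀ l : List R, (∀ e ∈ l, e * e = e) → ∀ c : R, l.prod * c = 1 → l.prod = 1 := by
  intro l
  induction l with
  | nil => intro _ _ _; simp
  | cons e t ih =>
    intro hid c hc
    have he : e * e = e := hid e List.mem_cons_self
    rw [List.prod_cons, mul_assoc] at hc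
    have he1 : e = 1 := by
      calc e = e * 1 := (mul_one e).symm
        _ = e * (e * (t.prod * c)) := by rw [hc]
        _ = (e * e) * (t.prod * c) := by rw [mul_assoc]
        _ = e * (t.prod * c) := by rw [he]
        _ = 1 := hc
    have ht : t.prod * c = 1 := by rw [he1, one_mul] at hc; exact hc
    have := ih (fun x hx => hid x (List.mem_cons_of_mem _ hx)) c ht
    rw [List.prod_cons, he1, one_mul, this]

/-- If every right singular element of a ring `R` is a product of idempotents,
then `R` is Dedekind finite. -/
theorem dedekindFinite_of_rightSingular_prod_idempotents
    (R : Type*) [Ring R]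
    (h : ∀ a : R, (∃ b : R, b ≠ 0 ∧ a * b = 0) →
      ∃ l : List R, (∀ e ∈ l, e * e = e) ∧ a = l.prod) :
    ∀ a b : R, a * b = 1 → b * a = 1 := by
  intro a b hab
  by_contra hba
  have hne : (1 : R) - b * a ≠ 0 := fun h0 => hba (sub_eq_zero.mp h0).symm
  have hz : a * (1 - b * a) = 0 := by
    rw [mul_sub, mul_one, ← mul_assoc, hab, one_mul, sub_self]
  obtain ⟨l, hl, ha⟩ := h a ⟨1 - b * a, hne, hz⟩
  have h1 : a = 1 := by rw [ha]; exact prod_idem_right_inv_eq_one l hl b (ha ▸ hab)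
  have hb : b = 1 := by rw [h1, one_mul] at hab; exact hab
  exact hba (by rw [h1, hb, one_mul])
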